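/- Fix pairwise distinct complex numbers u_1, …, u_n and m×m complex matrices A_1, …, A_n. Define G_{k,p} := A_k/(u_k−u_p) for p ≠ k and G_{k,k} := ∑_{l≠k} A_l/(u_k−u_l). Then for all k ≠ l: (a) ∑_{p=1}^n tr( A_p · [G_{k,p}, G_{l,p}] ) = 0 (i.e. the Schlesinger Hamiltonians Poisson commute with respect to the Lie–Poisson bracket {F,G}(A) = ∑_p tr(A_p [∇_p F, ∇_p G])); and (b) regarding H_k = ∑_{j≠k} tr(A_k A_j)/(u_k−u_j) as a function of (u_1,…,u_n) with the matrices fixed, ∂H_k/∂u_l = ∂H_l/∂u_k, both sides being equal to tr(A_k A_l)/(u_k−u_l)^2. -/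

import Mathlib

open Matrix

lemma tr_aux {m : ℕ} (c d : ℂ) (X Y Z : Matrix (Fin m) (Fin m) ℂ) :
    trace (X * ((c • Y) * (d • Z) - (d • Z) * (c • Y)))
      = c * d * (trace (X * (Y * Z)) - trace (X * (Z * Y))) := by
  simp only [smul_mul_assoc, mul_smul_comm, smul_smul, ← smul_sub, trace_smul, Matrix.mul_sub,
    trace_sub, smul_eq_mul]
  ring

lemma tr_aux_sum {m n : ℕ} (s : Finset (Fin n)) (c : Fin n → ℂ) (d : ℂ)
    (X Z : Matrix (Fin m) (Fin m) ℂ) (B : Fin n → Matrix (Fin m) (Fin m) ℂ) :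
    trace (X * ((∑ j ∈ s, c j • B j) * (d • Z) - (d • Z) * ∑ j ∈ s, c j • B j))
      = ∑ j ∈ s, c j * d * (trace (X * (B j * Z)) - trace (X * (Z * B j))) := by
  rw [Finset.sum_mul, Finset.mul_sum, ← Finset.sum_sub_distrib, Finset.mul_sum, Matrix.trace_sum]
  exact Finset.sum_congr rfl fun j _ => tr_aux (c j) d X (B j) Z

lemma tr_aux_sum' {m n : ℕ} (s : Finset (Fin n)) (c : Fin n → ℂ) (d : ℂ)
    (X Z : Matrix (Fin m) (Fin m) ℂ) (B : Fin n → Matrix (Fin m) (Fin m) ℂ) :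
    trace (X * ((d • Z) * (∑ j ∈ s, c j • B j) - (∑ j ∈ s, c j • B j) * (d • Z)))
      = ∑ j ∈ s, c j * d * (trace (X * (Z * B j)) - trace (X * (B j * Z))) := by
  rw [Finset.mul_sum, Finset.sum_mul, ← Finset.sum_sub_distrib, Finset.mul_sum, Matrix.trace_sum]
  refine Finset.sum_congr rfl fun j _ => ?_
  rw [show X * ((d • Z) * (c j • B j) - (c j • B j) * (d • Z))
      = -(X * ((c j • B j) * (d • Z) - (d • Z) * (c j • B j))) by
    rw [Matrix.mul_sub, Matrix.mul_sub, neg_sub]]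
  rw [trace_neg, tr_aux]; ring

lemma tr_cyc {m : ℕ} (P Q R : Matrix (Fin m) (Fin m) ℂ) :
    trace (P * (Q * R)) = trace (Q * (R * P)) := by
  rw [trace_mul_comm, mul_assoc]

/-- The Schlesinger Hamiltonians Poisson commute with respect to the Lie–Poisson bracket,
and satisfy `∂H_k/∂u_l = ∂H_l/∂u_k`, both being equal to `tr(A_k A_l)/(u_k−u_l)²`. -/
theorem stmt_2 (n m : ℕ)
    (u : Fin n → ℂ) (hu : Function.Injective u)
    (A : Fin n → Matrix (Fin m) (Fin m) ℂ)
    (G : Fin n → Fin n → Matrix (Fin m) (Fin m) ℂ)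
    (hGoff : ∀ k p, p ≠ k → G k p = (u k - u p)⁻¹ • A k)
    (hGdiag : ∀ k, G k k = ∑ l ∈ Finset.univ.erase k, (u k - u l)⁻¹ • A l)
    (Hfun : (Fin n → ℂ) → Fin n → ℂ)
    (hH : ∀ v k, Hfun v k = ∑ j ∈ Finset.univ.erase k, trace (A k * A j) / (v k - v j))
    (k l : Fin n) (hkl : k ≠ l) :
    (∑ p, trace (A p * (G k p * G l p - G l p * G k p)) = 0) ∧
    HasDerivAt (fun t : ℂ => Hfun (Function.update u l t) k)
      (trace (A k * A l) / (u k - u l) ^ 2) (u l) ∧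
    HasDerivAt (fun t : ℂ => Hfun (Function.update u k t) l)
      (trace (A k * A l) / (u k - u l) ^ 2) (u k) := by
  have hne : ∀ i j : Fin n, i ≠ j → u i - u j ≠ 0 :=
    fun i j h => sub_ne_zero.mpr fun e => h (hu e)
  -- generic derivative lemma
  have key : ∀ k l : Fin n, k ≠ l →
      HasDerivAt (fun t : ℂ => Hfun (Function.update u l t) k)
        (trace (A k * A l) / (u k - u l) ^ 2) (u l) := by
    intro k l hkl
    have hfeq : (fun t : ℂ => Hfun (Function.update u l t) k)
        = fun t : ℂ => ∑ j ∈ Finset.univ.erase k,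
            trace (A k * A j) / (Function.update u l t k - Function.update u l t j) :=
      funext fun t => hH _ k
    rw [hfeq]
    have hsum : HasDerivAt (fun t : ℂ => ∑ j ∈ Finset.univ.erase k,
        trace (A k * A j) / (Function.update u l t k - Function.update u l t j))
        (∑ j ∈ Finset.univ.erase k,
          if j = l then trace (A k * A l) / (u k - u l) ^ 2 else 0) (u l) := by
      apply HasDerivAt.fun_sum
      intro j hj
      by_cases hjl : j = l
      · subst hjl
        rw [if_pos rfl]
        have hfun : (fun t : ℂ => trace (A k * A j)
              / (Function.update u j t k - Function.update u j t j))
            = fun t : ℂ => trace (A k * A j) * (u k - t)⁻¹ := by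
          funext t
          rw [Function.update_self, Function.update_of_ne hkl, div_eq_mul_inv]
        rw [hfun]
        have h1 : HasDerivAt (fun t : ℂ => u k - t) (-1 : ℂ) (u j) := by
          simpa using (hasDerivAt_id (u j)).const_sub (u k)
        have h2 := h1.inv (hne k j hkl)
        have h3 := h2.const_mul (trace (A k * A j))
        exact h3.congr_deriv (by ring)
      · rw [if_neg hjl]
        have hfun : (fun t : ℂ => trace (A k * A j)
              / (Function.update u l t k - Function.update u l t j))
            = fun _ : ℂ => trace (A k * A j) / (u k - u j) := by
          funext t
          rw [Function.update_of_ne hkl, Function.update_of_ne hjl]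
        rw [hfun]
        exact hasDerivAt_const _ _
    convert hsum using 1
    rw [Finset.sum_ite_eq']
    simp [Ne.symm hkl]
  refine ⟨?_, key k l hkl, ?_⟩
  · -- Poisson commutation
    set f : Fin n → ℂ := fun p => trace (A p * (G k p * G l p - G l p * G k p)) with hf
    have hk : k ∈ (Finset.univ : Finset (Fin n)) := Finset.mem_univ k
    have hl : l ∈ Finset.univ.erase k := Finset.mem_erase.mpr ⟨hkl.symm, Finset.mem_univ l⟩
    have hkk : k ∈ Finset.univ.erase l := Finset.mem_erase.mpr ⟨hkl, Finset.mem_univ k⟩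
    rw [← Finset.sum_erase_add Finset.univ f hk, ← Finset.sum_erase_add _ f hl]
    have hfk : f k = ∑ j ∈ (Finset.univ.erase k).erase l,
        (u k - u j)⁻¹ * (u l - u k)⁻¹
          * (trace (A k * (A j * A l)) - trace (A k * (A l * A j))) := by
      show trace (A k * (G k k * G l k - G l k * G k k)) = _
      rw [hGdiag k, hGoff l k hkl, tr_aux_sum]
      exact (Finset.sum_erase _ (by simp)).symm
    have hfl : f l = ∑ j ∈ (Finset.univ.erase k).erase l,
        (u l - u j)⁻¹ * (u k - u l)⁻¹
          * (trace (A l * (A k * A j)) - trace (A l * (A j * A k))) := by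
      show trace (A l * (G k l * G l l - G l l * G k l)) = _
      rw [hGdiag l, hGoff k l hkl.symm, tr_aux_sum']
      rw [Finset.erase_right_comm]
      exact (Finset.sum_erase _ (by simp)).symm
    rw [hfk, hfl, ← Finset.sum_add_distrib, ← Finset.sum_add_distrib]
    apply Finset.sum_eq_zero
    intro p hp
    have hpl : p ≠ l := (Finset.mem_erase.mp hp).1
    have hpk : p ≠ k := (Finset.mem_erase.mp (Finset.mem_erase.mp hp).2).1
    have hfp : f p = (u k - u p)⁻¹ * (u l - u p)⁻¹
        * (trace (A p * (A k * A l)) - trace (A p * (A l * A k))) := by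
      show trace (A p * (G k p * G l p - G l p * G k p)) = _
      rw [hGoff k p hpk, hGoff l p hpl, tr_aux]
    rw [hfp,
      show trace (A l * (A k * A p)) = trace (A p * (A l * A k)) from
        (tr_cyc _ _ _).trans (tr_cyc _ _ _),
      show trace (A l * (A p * A k)) = trace (A p * (A k * A l)) from tr_cyc _ _ _,
      show trace (A k * (A p * A l)) = trace (A p * (A l * A k)) from tr_cyc _ _ _,
      show trace (A k * (A l * A p)) = trace (A p * (A k * A l)) from
        (tr_cyc _ _ _).trans (tr_cyc _ _ _)]
    have ha := hne k p hpk.symm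
    have hb := hne l p hpl.symm
    have he := hne l k hkl.symm
    have hd := hne k l hkl
    field_simp
    ring
  · -- symmetry of mixed derivative
    have h := key l k hkl.symm
    have heq : trace (A l * A k) / (u l - u k) ^ 2
        = trace (A k * A l) / (u k - u l) ^ 2 := by
      rw [Matrix.trace_mul_comm]; ring
    rwa [heq] at h
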